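/- For every integer n = 3m+1 with m > 1, there exists a simple 2-2-AND-BN on n nodes for which the size of the minimum control node set is m + 1 = (n−1)/3 + 1. -/

import Mathlib

namespace BN

variable {n : ℕ}

/-- The Boolean function `f` depends on input `j`. -/
def Depends (f : (Fin n → Bool) → Bool) (j : Fin n) : Prop :=
  ∃ x : Fin n → Bool, f (Function.update x j (!(x j))) ≠ f x

/-- The set of incoming nodes of node `i` (Γ⁻). -/
def inSet (F : Fin n → (Fin n → Bool) → Bool) (i : Fin n) : Set (Fin n) :=
  {j | Depends (F i) j}

/-- The set of outgoing nodes of node `i` (Γ⁺). -/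
def outSet (F : Fin n → (Fin n → Bool) → Bool) (i : Fin n) : Set (Fin n) :=
  {j | Depends (F j) i}

/-- The controlled trajectory: nodes in `U` get an xor-control signal. -/
def traj (F : Fin n → (Fin n → Bool) → Bool) (U : Finset (Fin n))
    (u : ℕ → Fin n → Bool) (x0 : Fin n → Bool) : ℕ → Fin n → Bool
  | 0 => x0
  | t + 1 => fun i =>
      if i ∈ U then Bool.xor (u t i) (F i (traj F U u x0 t))
      else F i (traj F U u x0 t)

/-- `U` is a control node set: any initial state can be driven to any target state. -/
def IsControlSet (F : Fin n → (Fin n → Bool) → Bool) (U : Finset (Fin n)) : Prop :=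
  ∀ x0 xT : Fin n → Bool, ∃ t : ℕ, 1 ≤ t ∧ ∃ u : ℕ → Fin n → Bool, traj F U u x0 t = xT

/-- AND of the inputs in `S` (no negations). -/
def andFun (S : Finset (Fin n)) (x : Fin n → Bool) : Bool :=
  decide (∀ j ∈ S, x j = true)

/-- `f` is the conjunction of `k` distinct inputs (no negations). -/
def IsSimpleKAnd (k : ℕ) (f : (Fin n → Bool) → Bool) : Prop :=
  ∃ S : Finset (Fin n), S.card = k ∧ f = andFun S

/-- A simple `k`-`k`-AND-BN: each function is a `k`-input AND (no negations) and
every node has indegree `k` and outdegree `k`. -/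
def IsSimpleKKAndBN (k : ℕ) (F : Fin n → (Fin n → Bool) → Bool) : Prop :=
  (∀ i, IsSimpleKAnd k (F i)) ∧ ∀ i, (inSet F i).ncard = k ∧ (outSet F i).ncard = k

/-! ### auxiliary lemmas -/

lemma andFun_pair (a b : Fin n) (x : Fin n → Bool) :
    andFun {a, b} x = (x a && x b) := by
  simp [andFun]

lemma depends_andFun_iff (S : Finset (Fin n)) (j : Fin n) :
    Depends (andFun S) j ↔ j ∈ S := by
  constructor
  · intro ⟨x, hx⟩
    by_contra hj
    apply hx
    unfold andFun
    rw [decide_eq_decide]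
    constructor
    · intro h l hl
      have := h l hl
      rwa [Function.update_of_ne (by rintro rfl; exact hj hl) _ _] at this
    · intro h l hl
      rw [Function.update_of_ne (by rintro rfl; exact hj hl) _ _]
      exact h l hl
  · intro hj
    refine ⟨fun _ => true, ?_⟩
    have h1 : andFun S (fun _ => true) = true := by simp [andFun]
    have h2 : andFun S (Function.update (fun _ => true) j (!true)) = false := by
      simp only [andFun, decide_eq_false_iff_not]
      intro h
      have := h j hj
      simp [Function.update_self] at this
    rw [h1, h2]; simp

section Construction

open Fin.CommRing

variable {m : ℕ}

/-- values of Fin numerals -/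
lemma val1 (hm : 1 < m) : ((1 : Fin (3*m+1))).val = 1 := by
  rw [Fin.val_one', Nat.mod_eq_of_lt (by omega)]

lemma val2 (hm : 1 < m) : ((2 : Fin (3*m+1))).val = 2 := by
  have : (2 : Fin (3*m+1)) = 1 + 1 := by norm_num
  rw [this, Fin.val_add, val1 hm, Nat.mod_eq_of_lt (by omega)]

lemma vadd1 (hm : 1 < m) (i : Fin (3*m+1)) (h : i.val + 1 < 3*m+1) :
    (i + 1).val = i.val + 1 := by
  rw [Fin.val_add, val1 hm, Nat.mod_eq_of_lt (by omega)]

lemma vadd2 (hm : 1 < m) (i : Fin (3*m+1)) (h : i.val + 2 < 3*m+1) :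
    (i + 2).val = i.val + 2 := by
  rw [Fin.val_add, val2 hm, Nat.mod_eq_of_lt (by omega)]

lemma vadd2' (hm : 1 < m) (i : Fin (3*m+1)) (h : i.val = 3*m) :
    (i + 2).val = 1 := by
  rw [Fin.val_add, val2 hm, h]
  have : 3*m + 2 = (3*m+1) + 1 := by omega
  rw [this, Nat.add_mod_left, Nat.mod_eq_of_lt (by omega)]

lemma vsub1 (hm : 1 < m) (i : Fin (3*m+1)) (h : 1 ≤ i.val) :
    (i - 1).val = i.val - 1 := by
  rw [Fin.sub_def]
  show (3*m+1 - (1 : Fin (3*m+1)).val + i.val) % (3*m+1) = i.val - 1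
  have hi := i.isLt
  have e : 3*m+1 - (1 : Fin (3*m+1)).val + i.val = (3*m+1) + (i.val - 1) := by
    rw [val1 hm]; omega
  rw [e, Nat.add_mod_left, Nat.mod_eq_of_lt (by omega)]

lemma vsub2 (hm : 1 < m) (i : Fin (3*m+1)) (h : 2 ≤ i.val) :
    (i - 2).val = i.val - 2 := by
  rw [Fin.sub_def]
  show (3*m+1 - (2 : Fin (3*m+1)).val + i.val) % (3*m+1) = i.val - 2
  have hi := i.isLt
  have e : 3*m+1 - (2 : Fin (3*m+1)).val + i.val = (3*m+1) + (i.val - 2) := by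
    rw [val2 hm]; omega
  rw [e, Nat.add_mod_left, Nat.mod_eq_of_lt (by omega)]

lemma vsub2' (hm : 1 < m) (i : Fin (3*m+1)) (h : i.val = 1) :
    (i - 2).val = 3*m := by
  rw [Fin.sub_def]
  show (3*m+1 - (2 : Fin (3*m+1)).val + i.val) % (3*m+1) = 3*m
  rw [val2 hm, h, Nat.mod_eq_of_lt (by omega)]
  omega

lemma one_ne_two (hm : 1 < m) : (1 : Fin (3*m+1)) ≠ 2 := by
  intro h
  have := congrArg Fin.val h
  rw [val1 hm, val2 hm] at this
  omega

/-- The network: `x_i(t+1) = x_{i-1}(t) ∧ x_{i-2}(t)` on a cycle. -/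
def Fc (m : ℕ) : Fin (3*m+1) → (Fin (3*m+1) → Bool) → Bool :=
  fun i => andFun {i - 1, i - 2}

lemma Fc_apply (i : Fin (3*m+1)) (x : Fin (3*m+1) → Bool) :
    Fc m i x = (x (i - 1) && x (i - 2)) := andFun_pair _ _ _

lemma sub_ne (hm : 1 < m) (i : Fin (3*m+1)) : i - 1 ≠ i - 2 := by
  intro h
  exact one_ne_two hm (sub_right_inj.mp h)

lemma add_ne (hm : 1 < m) (i : Fin (3*m+1)) : i + 1 ≠ i + 2 := by
  intro h
  exact one_ne_two hm (add_left_cancel h)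

/-- The control node set: multiples of 3. -/
def ctrlSet (m : ℕ) : Finset (Fin (3*m+1)) :=
  Finset.univ.filter (fun i => i.val % 3 = 0)

lemma mem_ctrlSet (i : Fin (3*m+1)) : i ∈ ctrlSet m ↔ i.val % 3 = 0 := by
  simp [ctrlSet]

lemma ctrlSet_card (hm : 1 < m) : (ctrlSet m).card = m + 1 := by
  have himg : ctrlSet m = Finset.image
      (fun b : Fin (m+1) => (⟨3*b.val, by have := b.isLt; omega⟩ : Fin (3*m+1)))
      Finset.univ := by
    ext a
    simp only [mem_ctrlSet, Finset.mem_image, Finset.mem_univ, true_and]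
    constructor
    · intro h
      have := a.isLt
      exact ⟨⟨a.val/3, by omega⟩, Fin.ext (by show 3*(a.val/3) = a.val; omega)⟩
    · rintro ⟨b, rfl⟩
      show 3*b.val % 3 = 0
      omega
  have hinj : Function.Injective
      (fun b : Fin (m+1) => (⟨3*b.val, by have := b.isLt; omega⟩ : Fin (3*m+1))) := by
    intro b c h
    have h2 : 3*b.val = 3*c.val := congrArg Fin.val h
    exact Fin.ext (by omega)
  rw [himg, Finset.card_image_of_injective _ hinj, Finset.card_univ, Fintype.card_fin]

/-- The one-step "predecessor" map used for targeting. -/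
def pre (m : ℕ) (z : Fin (3*m+1) → Bool) : Fin (3*m+1) → Bool := fun i =>
  if i.val % 3 = 0 then (if i.val = 3*m then z (i+2) else z (i+1) || z (i+2))
  else if i.val % 3 = 1 then z (i+1)
  else if i.val = 3*m - 1 then true else z (i+2)

/-- Key inversion property: on uncontrolled nodes, `F` applied to `pre z` gives back `z`. -/
lemma pre_inv (hm : 1 < m) (z : Fin (3*m+1) → Bool) (i : Fin (3*m+1))
    (h : i.val % 3 ≠ 0) : Fc m i (pre m z) = z i := by
  have hi := i.isLt
  rw [Fc_apply]
  rcases Nat.lt_or_ge i.val 2 with h2 | h2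
  · -- i.val = 1
    have hv : i.val = 1 := by omega
    have e1 : (i - 1).val = 0 := by rw [vsub1 hm i (by omega)]; omega
    have e2 : (i - 2).val = 3*m := vsub2' hm i hv
    have p1 : pre m z (i - 1) = (z (i - 1 + 1) || z (i - 1 + 2)) := by
      unfold pre
      rw [if_pos (by omega), if_neg (by omega)]
    have p2 : pre m z (i - 2) = z (i - 2 + 2) := by
      unfold pre
      rw [if_pos (by omega), if_pos (by omega)]
    rw [p1, p2, show i - 1 + 1 = i by ring, show i - 1 + 2 = i + 1 by ring,
      show i - 2 + 2 = i by ring]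
    cases hzi : z i <;> simp
  · rcases (show i.val % 3 = 1 ∨ i.val % 3 = 2 by omega) with h1 | h1
    · -- i.val % 3 = 1, i.val ≥ 4
      have hv4 : 4 ≤ i.val := by omega
      have e1 : (i - 1).val = i.val - 1 := vsub1 hm i (by omega)
      have e2 : (i - 2).val = i.val - 2 := vsub2 hm i (by omega)
      have hvm : i.val ≤ 3*m := by omega
      have hne : i.val ≠ 3*m := by omega
      have p1 : pre m z (i - 1) = (z (i - 1 + 1) || z (i - 1 + 2)) := by
        unfold pre
        rw [if_pos (by omega), if_neg (by omega)]
      have p2 : pre m z (i - 2) = z (i - 2 + 2) := by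
        unfold pre
        rw [if_neg (by omega), if_neg (by omega), if_neg (by omega)]
      rw [p1, p2, show i - 2 + 2 = i by ring, show i - 1 + 1 = i by ring,
        show i - 1 + 2 = i + 1 by ring]
      cases hzi : z i <;> simp
    · -- i.val % 3 = 2
      have e1 : (i - 1).val = i.val - 1 := vsub1 hm i (by omega)
      have e2 : (i - 2).val = i.val - 2 := vsub2 hm i (by omega)
      have hvm : i.val ≤ 3*m - 1 := by omega
      have p1 : pre m z (i - 1) = z (i - 1 + 1) := by
        unfold pre
        rw [if_neg (by omega), if_pos (by omega)]
      have p2 : pre m z (i - 2) = (z (i - 2 + 1) || z (i - 2 + 2)) := by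
        unfold pre
        rw [if_pos (by omega), if_neg (by omega)]
      rw [p1, p2, show i - 1 + 1 = i by ring, show i - 2 + 1 = i - 1 by ring,
        show i - 2 + 2 = i by ring]
      cases hzi : z i <;> simp

/-- After `k` backward steps, uncontrolled positions of rank `≥ 2m - k` are forced to 1. -/
lemma pre_iter_one (hm : 1 < m) (k : ℕ) (z : Fin (3*m+1) → Bool) (i : Fin (3*m+1))
    (h : i.val % 3 ≠ 0) (hk : 2*m ≤ 2*i.val/3 + k) : (pre m)^[k] z i = true := by
  induction k generalizing i with
  | zero =>
    exfalso
    have := i.isLt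
    rcases (show i.val % 3 = 1 ∨ i.val % 3 = 2 by omega) with h1 | h1 <;> omega
  | succ k ih =>
    rw [Function.iterate_succ_apply']
    have hi := i.isLt
    rcases (show i.val % 3 = 1 ∨ i.val % 3 = 2 by omega) with h1 | h1
    · have hlt : i.val + 1 < 3*m+1 := by omega
      have e1 : (i + 1).val = i.val + 1 := vadd1 hm i hlt
      have p1 : pre m ((pre m)^[k] z) i = (pre m)^[k] z (i + 1) := by
        unfold pre
        rw [if_neg (by omega), if_pos (by omega)]
      rw [p1]
      exact ih (i+1) (by omega) (by omega)
    · by_cases hsp : i.val = 3*m - 1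
      · unfold pre
        rw [if_neg (by omega), if_neg (by omega), if_pos hsp]
      · have hlt : i.val + 2 < 3*m+1 := by omega
        have e1 : (i + 2).val = i.val + 2 := vadd2 hm i hlt
        have p1 : pre m ((pre m)^[k] z) i = (pre m)^[k] z (i + 2) := by
          unfold pre
          rw [if_neg (by omega), if_neg (by omega), if_neg hsp]
        rw [p1]
        exact ih (i+2) (by omega) (by omega)

/-- Phase 1: saturating trajectory (controlled nodes held at 1). -/
def ph (m : ℕ) (x0 : Fin (3*m+1) → Bool) : ℕ → (Fin (3*m+1) → Bool)
  | 0 => x0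
  | t+1 => fun i => if i.val % 3 = 0 then true else Fc m i (ph m x0 t)

lemma ph_ctrl (x0 : Fin (3*m+1) → Bool) (t : ℕ) (i : Fin (3*m+1))
    (h : i.val % 3 = 0) (ht : 1 ≤ t) : ph m x0 t i = true := by
  cases t with
  | zero => omega
  | succ t => simp [ph, h]

lemma ph_unctrl (hm : 1 < m) (x0 : Fin (3*m+1) → Bool) (t : ℕ) (i : Fin (3*m+1))
    (h : i.val % 3 ≠ 0) (ht : 2*i.val/3 + 2 ≤ t) : ph m x0 t i = true := by
  induction t generalizing i with
  | zero =>
    exfalso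
    rcases (show i.val % 3 = 1 ∨ i.val % 3 = 2 by omega) with h1 | h1 <;> omega
  | succ t ih =>
    have hi := i.isLt
    show (if i.val % 3 = 0 then true else Fc m i (ph m x0 t)) = true
    rw [if_neg h, Fc_apply]
    rcases (show i.val % 3 = 1 ∨ i.val % 3 = 2 by omega) with h1 | h1
    · have e1 : (i - 1).val = i.val - 1 := vsub1 hm i (by omega)
      have c1 : ph m x0 t (i - 1) = true :=
        ph_ctrl x0 t (i-1) (by omega) (by omega)
      rcases Nat.lt_or_ge i.val 2 with h2 | h2
      · have e2 : (i - 2).val = 3*m := vsub2' hm i (by omega)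
        have c2 : ph m x0 t (i - 2) = true :=
          ph_ctrl x0 t (i-2) (by omega) (by omega)
        rw [c1, c2]; rfl
      · have e2 : (i - 2).val = i.val - 2 := vsub2 hm i (by omega)
        have c2 : ph m x0 t (i - 2) = true := ih (i-2) (by omega) (by omega)
        rw [c1, c2]; rfl
    · have e1 : (i - 1).val = i.val - 1 := vsub1 hm i (by omega)
      have e2 : (i - 2).val = i.val - 2 := vsub2 hm i (by omega)
      have c1 : ph m x0 t (i - 1) = true := ih (i-1) (by omega) (by omega)
      have c2 : ph m x0 t (i - 2) = true :=
        ph_ctrl x0 t (i-2) (by omega) (by omega)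
      rw [c1, c2]; rfl

lemma ph_all (hm : 1 < m) (x0 : Fin (3*m+1) → Bool) (i : Fin (3*m+1)) :
    ph m x0 (2*m+1) i = true := by
  by_cases h : i.val % 3 = 0
  · exact ph_ctrl x0 _ i h (by omega)
  · have hi := i.isLt
    rcases (show i.val % 3 = 1 ∨ i.val % 3 = 2 by omega) with h1 | h1 <;>
      exact ph_unctrl hm x0 _ i h (by omega)

/-- The full intended trajectory. -/
def xi (m : ℕ) (x0 y : Fin (3*m+1) → Bool) (t : ℕ) : Fin (3*m+1) → Bool :=
  if t ≤ 2*m+1 then ph m x0 t else (pre m)^[4*m+2 - t] y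

lemma xi_consistency (hm : 1 < m) (x0 y : Fin (3*m+1) → Bool) (t : ℕ) (ht : t < 4*m+2)
    (i : Fin (3*m+1)) (h : i.val % 3 ≠ 0) :
    Fc m i (xi m x0 y t) = xi m x0 y (t+1) i := by
  rcases Nat.lt_or_ge (t+1) (2*m+2) with h1 | h1
  · -- phase 1 step
    unfold xi
    rw [if_pos (by omega), if_pos (by omega)]
    show Fc m i (ph m x0 t) = (if i.val % 3 = 0 then true else Fc m i (ph m x0 t))
    rw [if_neg h]
  · rcases Nat.lt_or_ge t (2*m+2) with h2 | h2
    · -- boundary step : t = 2m+1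
      have ht' : t = 2*m+1 := by omega
      unfold xi
      rw [if_pos (by omega), if_neg (by omega), ht']
      rw [Fc_apply, ph_all hm x0 _, ph_all hm x0 _]
      have hi := i.isLt
      rw [pre_iter_one hm _ y i h (by omega)]
      rfl
    · -- backward phase
      unfold xi
      rw [if_neg (by omega), if_neg (by omega)]
      have e : 4*m+2 - t = (4*m+2 - (t+1)) + 1 := by omega
      rw [e, Function.iterate_succ_apply']
      exact pre_inv hm _ i h

/-- The control signals realizing `xi`. -/
def uu (m : ℕ) (x0 y : Fin (3*m+1) → Bool) (t : ℕ) (i : Fin (3*m+1)) : Bool :=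
  Bool.xor (xi m x0 y (t+1) i) (Fc m i (xi m x0 y t))

lemma traj_eq_xi (hm : 1 < m) (x0 y : Fin (3*m+1) → Bool) (t : ℕ) (ht : t ≤ 4*m+2) :
    traj (Fc m) (ctrlSet m) (uu m x0 y) x0 t = xi m x0 y t := by
  induction t with
  | zero =>
    show x0 = xi m x0 y 0
    unfold xi
    rw [if_pos (by omega)]
    rfl
  | succ t ih =>
    have ih' := ih (by omega)
    funext i
    show (if i ∈ ctrlSet m then Bool.xor (uu m x0 y t i) (Fc m i (traj (Fc m) (ctrlSet m) (uu m x0 y) x0 t))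
      else Fc m i (traj (Fc m) (ctrlSet m) (uu m x0 y) x0 t)) = xi m x0 y (t+1) i
    rw [ih']
    by_cases hi : i ∈ ctrlSet m
    · rw [if_pos hi]
      unfold uu
      cases (xi m x0 y (t+1) i) <;> cases (Fc m i (xi m x0 y t)) <;> rfl
    · rw [if_neg hi]
      rw [mem_ctrlSet] at hi
      exact xi_consistency hm x0 y t (by omega) i hi

lemma ctrl_is_control (hm : 1 < m) : IsControlSet (Fc m) (ctrlSet m) := by
  intro x0 xT
  refine ⟨4*m+2, by omega, uu m x0 xT, ?_⟩
  rw [traj_eq_xi hm x0 xT _ le_rfl]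
  unfold xi
  rw [if_neg (by omega)]
  simp

/-! ### the network is a simple 2-2-AND-BN -/

lemma Fc_simple (hm : 1 < m) : IsSimpleKKAndBN 2 (Fc m) := by
  constructor
  · intro i
    refine ⟨{i - 1, i - 2}, ?_, rfl⟩
    rw [Finset.card_insert_of_notMem (by simp [sub_ne hm i]), Finset.card_singleton]
  · intro i
    constructor
    · have hset : inSet (Fc m) i = {i - 1, i - 2} := by
        ext j
        show Depends (Fc m i) j ↔ _
        rw [show Fc m i = andFun {i-1, i-2} from rfl, depends_andFun_iff]
        simp
      rw [hset]
      exact Set.ncard_pair (sub_ne hm i)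
    · have hset : outSet (Fc m) i = {i + 1, i + 2} := by
        ext j
        show Depends (Fc m j) i ↔ _
        rw [show Fc m j = andFun {j-1, j-2} from rfl, depends_andFun_iff]
        simp only [Finset.mem_insert, Finset.mem_singleton, Set.mem_insert_iff,
          Set.mem_singleton_iff]
        constructor
        · rintro (h | h)
          · left; rw [h]; ring
          · right; rw [h]; ring
        · rintro (h | h)
          · left; rw [h]; ring
          · right; rw [h]; ring
      rw [hset]
      exact Set.ncard_pair (add_ne hm i)

/-! ### lower bound -/

lemma window_free (hm : 1 < m) (U : Finset (Fin (3*m+1))) (hU : U.card ≤ m) :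
    ∃ i : Fin (3*m+1), i ∉ U ∧ i + 1 ∉ U ∧ i + 2 ∉ U := by
  by_contra hc
  push_neg at hc
  classical
  set g : Fin (3*m+1) → Fin (3*m+1) :=
    fun i => if i ∈ U then i else if i + 1 ∈ U then i + 1 else i + 2 with hg
  have hmaps : ∀ i ∈ Finset.univ, g i ∈ U := by
    intro i _
    rw [hg]
    dsimp only
    split_ifs with h1 h2
    · exact h1
    · exact h2
    · exact hc i h1 h2
  have hfib : ∀ a ∈ U, (Finset.univ.filter (fun i => g i = a)).card ≤ 3 := by
    intro a _
    have hsub : Finset.univ.filter (fun i => g i = a) ⊆ {a, a - 1, a - 2} := by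
      intro i hi
      have hgi : g i = a := (Finset.mem_filter.mp hi).2
      have hcases : g i = i ∨ g i = i + 1 ∨ g i = i + 2 := by
        rw [hg]; dsimp only; split_ifs <;> simp
      simp only [Finset.mem_insert, Finset.mem_singleton]
      rcases hcases with h | h | h
      · left; rw [← hgi, h]
      · right; left; rw [← hgi, h]; ring
      · right; right; rw [← hgi, h]; ring
    calc (Finset.univ.filter (fun i => g i = a)).card
        ≤ ({a, a - 1, a - 2} : Finset (Fin (3*m+1))).card := Finset.card_le_card hsub
      _ ≤ 3 := by
          apply le_trans (Finset.card_insert_le _ _)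
          have h2 := Finset.card_insert_le (a-1) ({a-2} : Finset (Fin (3*m+1)))
          simp only [Finset.card_singleton] at h2
          omega
  have hcount := Finset.card_le_mul_card_image_of_maps_to hmaps 3 hfib
  rw [Finset.card_univ, Fintype.card_fin] at hcount
  omega

lemma lower_bound (hm : 1 < m) (U : Finset (Fin (3*m+1)))
    (hcs : IsControlSet (Fc m) U) : m + 1 ≤ U.card := by
  by_contra hlt
  push_neg at hlt
  obtain ⟨i, h0, h1, h2⟩ := window_free hm U (by omega)
  obtain ⟨t, ht, u, hu⟩ := hcs (fun _ => false) (fun j => decide (j = i ∨ j = i + 2))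
  cases t with
  | zero => omega
  | succ s =>
    set w := traj (Fc m) U u (fun _ => false) s with hw
    have happ : ∀ j : Fin (3*m+1), j ∉ U →
        Fc m j w = decide (j = i ∨ j = i + 2) := by
      intro j hj
      have h := congrFun hu j
      rw [← h]
      show Fc m j w = (if j ∈ U then Bool.xor (u s j) (Fc m j w) else Fc m j w)
      rw [if_neg hj]
    have n1 : i + 1 ≠ i := by
      intro h
      have h' : (1 : Fin (3*m+1)) = 0 := by
        have := add_eq_left.mp h
        exact this
      have := congrArg Fin.val h'
      rw [val1 hm, Fin.val_zero] at this
      omega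
    have e2 : Fc m (i+2) w = true := by rw [happ _ h2]; simp
    rw [Fc_apply, show i + 2 - 1 = i + 1 by ring, show i + 2 - 2 = i by ring,
      Bool.and_eq_true] at e2
    have e1 : Fc m (i+1) w = false := by
      rw [happ _ h1]
      simp [n1, add_ne hm i]
    rw [Fc_apply, show i + 1 - 1 = i by ring, show i + 1 - 2 = i - 1 by ring,
      e2.2, Bool.true_and] at e1
    have e0 : Fc m i w = true := by rw [happ _ h0]; simp
    rw [Fc_apply, Bool.and_eq_true] at e0
    rw [e0.1] at e1
    exact Bool.true_eq_false_eq_False e1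

end Construction

/-- For every `n = 3m + 1` with `m > 1`, there exists a simple 2-2-AND-BN
on `n` nodes whose minimum control node set has size `m + 1`. -/
theorem stmt11 (m : ℕ) (hm : 1 < m) :
    ∃ F : Fin (3 * m + 1) → (Fin (3 * m + 1) → Bool) → Bool, IsSimpleKKAndBN 2 F ∧
      (∃ U : Finset (Fin (3 * m + 1)), IsControlSet F U ∧ U.card = m + 1) ∧
      ∀ U : Finset (Fin (3 * m + 1)), IsControlSet F U → m + 1 ≤ U.card := by
  exact ⟨Fc m, Fc_simple hm, ⟨ctrlSet m, ctrl_is_control hm, ctrlSet_card hm⟩,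
    fun U hU => lower_bound hm U hU⟩

end BN
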